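/- Let p be an odd prime and m, n₁ positive integers, and set n = 2^m·p^{n₁}. If n ≠ 6 then the girth of the unit graph G(Z_n) equals 4, and if n = 6 then the girth of G(Z_n) equals 6. -/

import Mathlib

/-- The unit graph of `ZMod m`: distinct vertices `x, y` are adjacent iff `x + y` is a unit. -/
def unitGraph (m : ℕ) : SimpleGraph (ZMod m) where
  Adj x y := x ≠ y ∧ IsUnit (x + y)
  symm := by
    refine ⟨fun x y h => ?_⟩
    exact ⟨h.1.symm, by rw [add_comm]; exact h.2⟩
  loopless := by
    refine ⟨fun x h => ?_⟩
    exact h.1 rfl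

open SimpleGraph

section Aux

lemma unitGraph_isCycle4 {V} {G : SimpleGraph V} {a b c d : V} (hab : G.Adj a b)
    (hbc : G.Adj b c) (hcd : G.Adj c d) (hda : G.Adj d a) (hac : a ≠ c) (hbd : b ≠ d) :
    (Walk.cons hab (Walk.cons hbc (Walk.cons hcd hda.toWalk))).IsCycle := by
  simp [Walk.isCycle_def, Walk.isTrail_def, hab.ne, hbc.ne, hcd.ne, hda.ne, hac, hbd,
    hab.ne', hbc.ne', hcd.ne', hda.ne', hac.symm, hbd.symm]

lemma unitGraph_isCycle6 {V} {G : SimpleGraph V} {a b c d e f : V} (h1 : G.Adj a b)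
    (h2 : G.Adj b c) (h3 : G.Adj c d) (h4 : G.Adj d e) (h5 : G.Adj e f) (h6 : G.Adj f a)
    (hac : a ≠ c) (had : a ≠ d) (hae : a ≠ e) (hbd : b ≠ d) (hbe : b ≠ e) (hbf : b ≠ f)
    (hce : c ≠ e) (hcf : c ≠ f) (hdf : d ≠ f) :
    (Walk.cons h1 (Walk.cons h2 (Walk.cons h3 (Walk.cons h4
      (Walk.cons h5 h6.toWalk))))).IsCycle := by
  simp [Walk.isCycle_def, Walk.isTrail_def, h1.ne, h2.ne, h3.ne, h4.ne, h5.ne, h6.ne,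
    h1.ne', h2.ne', h3.ne', h4.ne', h5.ne', h6.ne', hac, had, hae, hbd, hbe, hbf, hce, hcf, hdf,
    hac.symm, had.symm, hae.symm, hbd.symm, hbe.symm, hbf.symm, hce.symm, hcf.symm, hdf.symm]

lemma unitGraph_egirth_le {V} {G : SimpleGraph V} {a : V} (w : G.Walk a a) (hw : w.IsCycle) :
    G.egirth ≤ w.length :=
  iInf_le_of_le a (iInf_le_of_le w (iInf_le_of_le hw le_rfl))

lemma unitGraph_parity {n : ℕ} (hn : 2 ∣ n) {a b : ZMod n} (w : (unitGraph n).Walk a b) :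
    ZMod.castHom hn (ZMod 2) b = ZMod.castHom hn (ZMod 2) a + w.length := by
  induction w with
  | nil => simp
  | cons h q ih =>
    rename_i u v x
    have hu : IsUnit ((ZMod.castHom hn (ZMod 2)) (u + v)) := h.2.map _
    have h1 : (ZMod.castHom hn (ZMod 2)) u + (ZMod.castHom hn (ZMod 2)) v = 1 := by
      rw [← map_add]
      revert hu
      generalize (ZMod.castHom hn (ZMod 2)) (u + v) = z
      revert z; decide
    have h2 : (ZMod.castHom hn (ZMod 2)) v = (ZMod.castHom hn (ZMod 2)) u + 1 := by
      revert h1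
      generalize (ZMod.castHom hn (ZMod 2)) u = z1
      generalize (ZMod.castHom hn (ZMod 2)) v = z2
      revert z1 z2; decide
    rw [ih, h2, Walk.length_cons]
    push_cast
    ring

lemma unitGraph_even_cycle {n : ℕ} (hn : 2 ∣ n) {a : ZMod n} (w : (unitGraph n).Walk a a) :
    2 ∣ w.length := by
  have := unitGraph_parity hn w
  rw [left_eq_add] at this
  exact (ZMod.natCast_eq_zero_iff _ _).mp this

lemma zmod6_unit : ∀ z : ZMod 6, IsUnit z ↔ z = 1 ∨ z = 5 := by decide

lemma zmod6_no4 : ∀ x0 x1 x2 x3 : ZMod 6, (x0+x1 = 1 ∨ x0+x1 = 5) →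
    (x1+x2 = 1 ∨ x1+x2 = 5) → (x2+x3 = 1 ∨ x2+x3 = 5) → (x3+x0 = 1 ∨ x3+x0 = 5) →
    x0 ≠ x2 → x1 ≠ x3 → False := by decide

lemma unitGraph_no4cycle (a : ZMod 6) (w : (unitGraph 6).Walk a a) (hc : w.IsCycle) :
    w.length ≠ 4 := by
  intro hlen
  match w, hlen with
  | .cons (v := b) h1 (.cons (v := c) h2 (.cons (v := d) h3 (.cons h4 .nil))), _ =>
    have hsup := hc.2
    simp [Walk.support] at hsup
    have h := zmod6_no4 a b c d ((zmod6_unit _).mp h1.2) ((zmod6_unit _).mp h2.2)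
      ((zmod6_unit _).mp h3.2) ((zmod6_unit _).mp h4.2) (by tauto) (by tauto)
    exact h

lemma unitGraph_six_girth : (unitGraph 6).girth = 6 := by
  have adj : ∀ x y : ZMod 6, x ≠ y → (x + y = 1 ∨ x + y = 5) → (unitGraph 6).Adj x y :=
    fun x y h hu => ⟨h, (zmod6_unit _).mpr hu⟩
  have h1 : (unitGraph 6).Adj 0 1 := adj _ _ (by decide) (by decide)
  have h2 : (unitGraph 6).Adj 1 4 := adj _ _ (by decide) (by decide)
  have h3 : (unitGraph 6).Adj 4 3 := adj _ _ (by decide) (by decide)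
  have h4 : (unitGraph 6).Adj 3 2 := adj _ _ (by decide) (by decide)
  have h5 : (unitGraph 6).Adj 2 5 := adj _ _ (by decide) (by decide)
  have h6 : (unitGraph 6).Adj 5 0 := adj _ _ (by decide) (by decide)
  have hcyc := unitGraph_isCycle6 h1 h2 h3 h4 h5 h6 (by decide) (by decide) (by decide)
    (by decide) (by decide) (by decide) (by decide) (by decide) (by decide)
  have hub : (unitGraph 6).egirth ≤ 6 := by
    have := unitGraph_egirth_le _ hcyc
    simpa using this
  have hlb : (6 : ℕ∞) ≤ (unitGraph 6).egirth := by
    rw [le_egirth]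
    intro a w hw
    have he := unitGraph_even_cycle (by norm_num) w
    have h3l := hw.three_le_length
    have hne4 := unitGraph_no4cycle a w hw
    exact_mod_cast (by omega : 6 ≤ w.length)
  have : (unitGraph 6).egirth = 6 := le_antisymm hub hlb
  rw [SimpleGraph.girth, this]
  rfl

lemma unitGraph_natCast_ne {n j k : ℕ} [NeZero n] (hj : j < n) (hk : k < n) (hjk : j ≠ k) :
    (j : ZMod n) ≠ (k : ZMod n) := fun h => hjk (by
  have := congrArg ZMod.val h
  rwa [ZMod.val_cast_of_lt hj, ZMod.val_cast_of_lt hk] at this)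

end Aux

theorem unitGraph_twoPowTimesOddPrimePow_girth (p m n₁ : ℕ)
    (hp : p.Prime) (hodd : Odd p) (hm : 0 < m) (hn₁ : 0 < n₁) :
    (2 ^ m * p ^ n₁ ≠ 6 → (unitGraph (2 ^ m * p ^ n₁)).girth = 4) ∧
    (2 ^ m * p ^ n₁ = 6 → (unitGraph (2 ^ m * p ^ n₁)).girth = 6) := by
  set n := 2 ^ m * p ^ n₁ with hn
  have hp3 : 3 ≤ p := by
    rcases hp.two_le.lt_or_eq with h | h
    · omega
    · exfalso; exact (Nat.not_odd_iff_even.mpr (h ▸ even_two)) hodd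
  have h2m : 2 ≤ 2 ^ m := by
    calc 2 = 2 ^ 1 := rfl
    _ ≤ 2 ^ m := Nat.pow_le_pow_right (by norm_num) hm
  have hppow : p ≤ p ^ n₁ := by
    calc p = p ^ 1 := (pow_one p).symm
    _ ≤ p ^ n₁ := Nat.pow_le_pow_right (by omega) hn₁
  have hn6 : 6 ≤ n := by
    calc 6 = 2 * 3 := rfl
    _ ≤ 2 ^ m * p ^ n₁ := Nat.mul_le_mul h2m (le_trans hp3 hppow)
  haveI : NeZero n := ⟨by omega⟩
  haveI : Fact (1 < n) := ⟨by omega⟩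
  have hdvd : 2 ∣ n := dvd_mul_of_dvd_left (dvd_pow_self 2 hm.ne') _
  constructor
  · -- n ≠ 6 case
    intro hne6
    -- lower bound: 4 ≤ egirth
    have hlb : (4 : ℕ∞) ≤ (unitGraph n).egirth := by
      rw [le_egirth]
      intro a w hw
      have he := unitGraph_even_cycle hdvd w
      have h3l := hw.three_le_length
      exact_mod_cast (by omega : 4 ≤ w.length)
    -- upper bound: exhibit a 4-cycle
    have hub : (unitGraph n).egirth ≤ 4 := by
      by_cases hP3 : p = 3
      · -- n = 2^m * 3^n₁, n ≠ 6, so n ≥ 12; use 0, 1, 6, 5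
        have hn12 : 12 ≤ n := by
          by_cases hm1 : m = 1
          · have hn11 : n₁ ≠ 1 := by
              intro h
              rw [hn, hm1, h, hP3] at hne6
              norm_num at hne6
            have : 9 ≤ p ^ n₁ := by
              calc 9 = 3 ^ 2 := rfl
              _ ≤ p ^ n₁ := by
                rw [hP3]; exact Nat.pow_le_pow_right (by norm_num) (by omega)
            calc 12 ≤ 2 * 9 := by norm_num
            _ ≤ 2 ^ m * p ^ n₁ := Nat.mul_le_mul (by rw [hm1]; norm_num) this
          · have h4 : 4 ≤ 2 ^ m := by
              calc 4 = 2 ^ 2 := rfl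
              _ ≤ 2 ^ m := Nat.pow_le_pow_right (by norm_num) (by omega)
            calc 12 = 4 * 3 := rfl
            _ ≤ 2 ^ m * p ^ n₁ := Nat.mul_le_mul h4 (le_trans hp3 hppow)
        have cop : ∀ k : ℕ, Nat.Coprime k 2 → Nat.Coprime k 3 → Nat.Coprime k n := by
          intro k hk2 hk3
          rw [hn, hP3]
          exact Nat.Coprime.mul_right (Nat.Coprime.pow_right _ hk2)
            (Nat.Coprime.pow_right _ hk3)
        have u1 : IsUnit ((1 : ℕ) : ZMod n) := by simp
        have u7 : IsUnit ((7 : ℕ) : ZMod n) :=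
          (ZMod.isUnit_iff_coprime 7 n).mpr (cop 7 (by decide) (by decide))
        have u11 : IsUnit ((11 : ℕ) : ZMod n) :=
          (ZMod.isUnit_iff_coprime 11 n).mpr (cop 11 (by decide) (by decide))
        have u5 : IsUnit ((5 : ℕ) : ZMod n) :=
          (ZMod.isUnit_iff_coprime 5 n).mpr (cop 5 (by decide) (by decide))
        have hab : (unitGraph n).Adj ((0 : ℕ) : ZMod n) ((1 : ℕ) : ZMod n) := by
          refine ⟨unitGraph_natCast_ne (by omega) (by omega) (by norm_num), ?_⟩
          rw [← Nat.cast_add]; exact u1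
        have hbc : (unitGraph n).Adj ((1 : ℕ) : ZMod n) ((6 : ℕ) : ZMod n) := by
          refine ⟨unitGraph_natCast_ne (by omega) (by omega) (by norm_num), ?_⟩
          rw [← Nat.cast_add]; exact u7
        have hcd : (unitGraph n).Adj ((6 : ℕ) : ZMod n) ((5 : ℕ) : ZMod n) := by
          refine ⟨unitGraph_natCast_ne (by omega) (by omega) (by norm_num), ?_⟩
          rw [← Nat.cast_add]; exact u11
        have hda : (unitGraph n).Adj ((5 : ℕ) : ZMod n) ((0 : ℕ) : ZMod n) := by
          refine ⟨unitGraph_natCast_ne (by omega) (by omega) (by norm_num), ?_⟩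
          rw [← Nat.cast_add]; exact u5
        have hcyc := unitGraph_isCycle4 hab hbc hcd hda
          (unitGraph_natCast_ne (by omega) (by omega) (by norm_num))
          (unitGraph_natCast_ne (by omega) (by omega) (by norm_num))
        have := unitGraph_egirth_le _ hcyc
        simpa using this
      · -- p ≠ 3 : use 0, 1, -2, -1
        have nz : ∀ k : ℕ, 0 < k → k < n → ((k : ℕ) : ZMod n) ≠ 0 := by
          intro k hk0 hkn h
          rw [ZMod.natCast_eq_zero_iff] at h
          have := Nat.le_of_dvd hk0 h
          omega
        have nz2 : ((2 : ℕ) : ZMod n) ≠ 0 := nz 2 (by norm_num) (by omega)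
        have nz3 : ((3 : ℕ) : ZMod n) ≠ 0 := nz 3 (by norm_num) (by omega)
        have nz1 : ((1 : ℕ) : ZMod n) ≠ 0 := nz 1 (by norm_num) (by omega)
        have u3 : IsUnit ((3 : ℕ) : ZMod n) := by
          refine (ZMod.isUnit_iff_coprime 3 n).mpr ?_
          rw [hn]
          exact Nat.Coprime.mul_right (Nat.Coprime.pow_right _ (by decide))
            (Nat.Coprime.pow_right _ ((Nat.coprime_primes (by norm_num) hp).mpr (fun h => hP3 h.symm)))
        have hab : (unitGraph n).Adj (0 : ZMod n) 1 := by
          refine ⟨?_, by simpa using isUnit_one⟩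
          intro h; apply nz1; push_cast; exact h.symm
        have hbc : (unitGraph n).Adj (1 : ZMod n) (-2) := by
          refine ⟨?_, ?_⟩
          · intro h; apply nz3; push_cast; linear_combination h
          · rw [show ((1 : ZMod n) + -2) = -1 by ring]
            exact isUnit_one.neg
        have hcd : (unitGraph n).Adj (-2 : ZMod n) (-1) := by
          refine ⟨?_, ?_⟩
          · intro h; apply nz1; push_cast; linear_combination -h
          · rw [show ((-2 : ZMod n) + -1) = -((3 : ℕ) : ZMod n) by push_cast; ring]
            exact u3.neg
        have hda : (unitGraph n).Adj (-1 : ZMod n) 0 := by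
          refine ⟨?_, ?_⟩
          · intro h; apply nz1; push_cast; linear_combination -h
          · rw [show ((-1 : ZMod n) + 0) = -1 by ring]
            exact isUnit_one.neg
        have hac : (0 : ZMod n) ≠ -2 := by
          intro h; apply nz2; push_cast; linear_combination h
        have hbd : (1 : ZMod n) ≠ -1 := by
          intro h; apply nz2; push_cast; linear_combination h
        have hcyc := unitGraph_isCycle4 hab hbc hcd hda hac hbd
        have := unitGraph_egirth_le _ hcyc
        simpa using this
    have heg : (unitGraph n).egirth = 4 := le_antisymm hub hlb
    rw [SimpleGraph.girth, heg]
    rfl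
  · -- n = 6 case
    intro h6
    rw [h6]
    exact unitGraph_six_girth
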